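/- Let K be a field with level s(K) > 1 (in particular -1 is not a square in K). Then the field F = K(X)(√(−(1+X²))) satisfies s(F) = 2, and hence p'(F) = 3, where p'(F) = s(F) + 1 for nonreal F of characteristic ≠ 2. -/

import Mathlib

/-- `a` is a sum of `n` squares in `R`. -/
def IsSumSqN {R : Type*} [CommRing R] (n : ℕ) (a : R) : Prop :=
  ∃ x : Fin n → R, a = ∑ i, x i ^ 2

/-- `a` is a sum of squares in `R`. -/
def IsSOS {R : Type*} [CommRing R] (a : R) : Prop := ∃ n, IsSumSqN n a

/-- The level `s(R)`. -/
noncomputable def levelN (R : Type*) [CommRing R] : ℕ∞ :=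
  sInf {n : ℕ∞ | ∃ m : ℕ, (m : ℕ∞) = n ∧ IsSumSqN m (-1 : R)}

/-- The Pythagoras number `p(R)`. -/
noncomputable def pythNum (R : Type*) [CommRing R] : ℕ∞ :=
  sInf {n : ℕ∞ | ∃ m : ℕ, (m : ℕ∞) = n ∧ ∀ a : R, IsSOS a → IsSumSqN m a}

open Classical in
/-- The modified Pythagoras number `p'(R)`. -/
noncomputable def pythNum' (R : Type*) [CommRing R] : ℕ∞ :=
  if ¬ IsSOS (-1 : R) ∨ ringChar R = 2 then pythNum R else levelN R + 1

open Polynomial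


lemma sq_expand {K : Type*} [CommRing K] (a b : K) : (C a * X + C b) ^ 2 =
    C (a ^ 2) * X ^ 2 + C (2 * a * b) * X + C (b ^ 2) := by
  simp only [map_pow, map_mul, map_ofNat]; ring

lemma no_sq_neg_one {K : Type*} [Field K] (hsq : ∀ a : K, a ^ 2 ≠ -1) (q : Polynomial K) :
    q ^ 2 ≠ -1 := by
  intro h
  have hd : q.natDegree = 0 := by
    have := congrArg natDegree h
    rw [natDegree_pow] at this
    simpa using this
  obtain ⟨a, rfl⟩ := natDegree_eq_zero.mp hd
  refine hsq a ?_
  have := congrArg (fun p => coeff p 0) h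
  simpa only [← C_pow, coeff_C, if_pos rfl, if_pos trivial, coeff_neg, coeff_one] using this

lemma adjoin_sq_ne_neg_one {L : Type*} [Field L] {d : L}
    (h2 : (2 : L) ≠ 0) (hneg : ∀ y : L, y ^ 2 ≠ -1) (hsqd : ∀ y : L, y ^ 2 ≠ d)
    (y : AdjoinRoot (X ^ 2 + C d)) : y ^ 2 ≠ -1 := by
  intro h
  obtain ⟨g, rfl⟩ := AdjoinRoot.mk_surjective y
  set f : Polynomial L := X ^ 2 + C d with hfdef
  have hf : f.Monic := by
    rw [show f = X ^ 2 - C (-d) by rw [map_neg, sub_neg_eq_add]]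
    exact monic_X_pow_sub_C _ two_ne_zero
  have hfd : f.natDegree = 2 := by rw [hfdef]; compute_degree!
  have hdvd : f ∣ g ^ 2 + 1 := by
    rw [← AdjoinRoot.mk_eq_zero, map_add, map_pow, map_one, h, neg_add_cancel]
  have h1 : f ∣ g %ₘ f - g := ⟨-(g /ₘ f), by rw [modByMonic_eq_sub_mul_div g f]; ring⟩
  set r := g %ₘ f with hrdef
  have h3 : f ∣ r ^ 2 - g ^ 2 := by
    obtain ⟨q, hq⟩ := h1
    exact ⟨q * (r + g), by linear_combination (r + g) * hq⟩
  have hr : f ∣ r ^ 2 + 1 := by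
    have heq : r ^ 2 + 1 = (r ^ 2 - g ^ 2) + (g ^ 2 + 1) := by ring
    rw [heq]; exact dvd_add h3 hdvd
  have hrdeg : r.natDegree ≤ 1 := by
    by_cases hr0 : r = 0
    · simp [hr0]
    · have hlt := degree_modByMonic_lt g hf
      rw [← hrdef] at hlt
      have : r.natDegree < f.natDegree := natDegree_lt_natDegree hr0 hlt
      omega
  obtain ⟨u, hu⟩ := hr
  by_cases hu0 : u = 0
  · rw [hu0, mul_zero] at hu
    exact no_sq_neg_one hneg r (by linear_combination hu)
  · have hud : u.natDegree = 0 := by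
      have hdeg := congrArg natDegree hu
      rw [natDegree_mul hf.ne_zero hu0, hfd] at hdeg
      have hb : (r ^ 2 + 1).natDegree ≤ 2 := by
        refine le_trans (natDegree_add_le _ _) ?_
        simp [natDegree_pow]
        omega
      omega
    obtain ⟨c, rfl⟩ := natDegree_eq_zero.mp hud
    have hc : c ≠ 0 := fun h0 => hu0 (by rw [h0, map_zero])
    rw [eq_X_add_C_of_natDegree_le_one hrdeg, sq_expand, hfdef] at hu
    have e2 := congrArg (fun p => coeff p 2) hu
    have e1 := congrArg (fun p => coeff p 1) hu
    have e0 := congrArg (fun p => coeff p 0) hu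
    simp only [coeff_add, coeff_C_mul, coeff_mul_C, coeff_X_pow, coeff_C, coeff_one,
      coeff_X] at e2 e1 e0
    norm_num at e2 e1 e0
    rcases e1 with (h' | h') | h'
    · exact h2 h'
    · rw [h'] at e2; norm_num at e2
      exact hc e2.symm
    · rw [h'] at e0
      norm_num at e0
      have ha : r.coeff 1 ≠ 0 := by
        rintro ha
        rw [ha] at e2; norm_num at e2
        exact hc e2.symm
      refine hsqd (r.coeff 1)⁻¹ ?_
      rw [← e2] at e0
      field_simp at e0 ⊢
      linear_combination e0

lemma sq_descend {K : Type*} [Field K] {p : Polynomial K} {y : RatFunc K}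
    (h : y ^ 2 = algebraMap (Polynomial K) (RatFunc K) p) : ∃ q : Polynomial K, q ^ 2 = p := by
  have hint : IsIntegral (Polynomial K) y := by
    refine ⟨X ^ 2 - C p, monic_X_pow_sub_C p (by norm_num), ?_⟩
    simp [eval₂, h]
  obtain ⟨q, hq⟩ := IsIntegrallyClosed.isIntegral_iff.mp hint
  refine ⟨q, IsFractionRing.injective (Polynomial K) (RatFunc K) ?_⟩
  rw [map_pow, hq, h]

lemma deg_one_of_sq_deg_two {K : Type*} [Field K] {q c : Polynomial K} (hc : c.natDegree = 2)
    (h : q ^ 2 = c) : q.natDegree = 1 := by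
  have := congrArg natDegree h
  rw [natDegree_pow, hc] at this
  omega

lemma no_sq_one_add_X_sq {K : Type*} [Field K] (h2 : (2 : K) ≠ 0) (q : Polynomial K) :
    q ^ 2 ≠ 1 + X ^ 2 := by
  intro h
  have hq1 : q.natDegree = 1 := deg_one_of_sq_deg_two (by compute_degree!) h
  rw [eq_X_add_C_of_natDegree_le_one hq1.le, sq_expand] at h
  have e2 := congrArg (fun p => coeff p 2) h
  have e1 := congrArg (fun p => coeff p 1) h
  have e0 := congrArg (fun p => coeff p 0) h
  simp only [coeff_add, coeff_C_mul, coeff_X_pow, coeff_C, coeff_one, coeff_X] at e2 e1 e0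
  norm_num at e2 e1 e0
  rcases e1 with (h' | h') | h' <;> [exact h2 h'; rcases e2 with e|e <;> rw [h'] at e <;> norm_num at e; rcases e0 with e|e <;> rw [h'] at e <;> norm_num at e]

lemma no_sq_neg_one_add_X_sq {K : Type*} [Field K] (hsq : ∀ a : K, a ^ 2 ≠ -1) (q : Polynomial K) :
    q ^ 2 ≠ -(1 + X ^ 2) := by
  intro h
  have hq1 : q.natDegree = 1 := deg_one_of_sq_deg_two (by rw [natDegree_neg]; compute_degree!) h
  rw [eq_X_add_C_of_natDegree_le_one hq1.le, sq_expand] at h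
  have e2 := congrArg (fun p => coeff p 2) h
  simp only [coeff_add, coeff_C_mul, coeff_X_pow, coeff_C, coeff_one, coeff_X, coeff_neg] at e2
  norm_num at e2
  exact hsq _ e2

section helpers
variable {K : Type*} [Field K]

lemma level_witness {R : Type*} [CommRing R] {m : ℕ} (h : IsSumSqN m (-1 : R)) :
    levelN R ≤ m := sInf_le ⟨m, rfl, h⟩

lemma levelN_eq_two {R : Type*} [CommRing R] [Nontrivial R] (h2 : IsSumSqN 2 (-1 : R))
    (h1 : ∀ x : R, x ^ 2 ≠ -1) : levelN R = 2 := by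
  refine le_antisymm (level_witness h2) (le_sInf ?_)
  rintro n ⟨m, rfl, x, hx⟩
  have hm : 2 ≤ m := by
    by_contra hm
    interval_cases m
    · simp at hx
    · rw [Fin.sum_univ_one] at hx
      exact h1 (x 0) hx.symm
  exact_mod_cast Nat.cast_le.mpr hm

lemma hsqK_of_level (hs : 1 < levelN K) : ∀ a : K, a ^ 2 ≠ -1 := by
  intro a ha
  have : levelN K ≤ 1 := level_witness ⟨fun _ => a, by simp [ha.symm]⟩
  exact absurd this (not_le.mpr hs)

lemma h2K_of_level (hs : 1 < levelN K) : (2 : K) ≠ 0 := by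
  intro h2
  refine hsqK_of_level hs 1 ?_
  rw [one_pow]
  linear_combination h2
end helpers

/-- If `s(K) > 1`, then `F = K(X)(√(-(1+X²)))` has level 2 and `p'(F) = 3`. -/
theorem level_adjoin_sqrt_neg_one_add_sq (K : Type*) [Field K] (hs : 1 < levelN K) :
    levelN (AdjoinRoot
        (Polynomial.X ^ 2 + Polynomial.C (1 + RatFunc.X ^ 2) : Polynomial (RatFunc K))) = 2 ∧
      pythNum' (AdjoinRoot
        (Polynomial.X ^ 2 + Polynomial.C (1 + RatFunc.X ^ 2) : Polynomial (RatFunc K))) = 3 := by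
  have hsqK : ∀ a : K, a ^ 2 ≠ -1 := hsqK_of_level hs
  have h2K : (2 : K) ≠ 0 := h2K_of_level hs
  set L := RatFunc K with hL
  set d : L := 1 + RatFunc.X ^ 2 with hd
  set f : Polynomial L := X ^ 2 + C d with hf
  -- facts in L
  have h2L : (2 : L) ≠ 0 := by
    intro h
    apply h2K
    have : algebraMap K L (2 : K) = (2 : L) := map_ofNat _ 2
    exact (algebraMap K L).injective (by rw [this, h, map_zero])
  have hnegL : ∀ y : L, y ^ 2 ≠ -1 := by
    intro y hy
    obtain ⟨q, hq⟩ := sq_descend (K := K) (p := -1) (by rw [map_neg, map_one]; exact hy)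
    exact no_sq_neg_one hsqK q hq
  have hsqdL : ∀ y : L, y ^ 2 ≠ d := by
    intro y hy
    obtain ⟨q, hq⟩ := sq_descend (K := K) (p := 1 + X ^ 2)
      (by rw [map_add, map_one, map_pow, RatFunc.algebraMap_X]; exact hy)
    exact no_sq_one_add_X_sq h2K q hq
  have hnegdL : ∀ y : L, y ^ 2 ≠ -d := by
    intro y hy
    obtain ⟨q, hq⟩ := sq_descend (K := K) (p := -(1 + X ^ 2))
      (by rw [map_neg, map_add, map_one, map_pow, RatFunc.algebraMap_X]; exact hy)
    exact no_sq_neg_one_add_X_sq hsqK q hq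
  -- irreducibility and field structure
  have hirr : Irreducible f := by
    have : f = X ^ 2 - C (-d) := by rw [map_neg, sub_neg_eq_add]
    rw [this]
    exact X_pow_sub_C_irreducible_of_prime Nat.prime_two fun b hb => hnegdL b hb
  haveI : Fact (Irreducible f) := ⟨hirr⟩
  set F := AdjoinRoot f with hF
  -- -1 is a sum of two squares in F
  have hroot : (AdjoinRoot.root f) ^ 2 = -(AdjoinRoot.of f d) := by
    have h0 : AdjoinRoot.mk f (X ^ 2) + AdjoinRoot.mk f (C d) = 0 := by
      rw [← map_add, ← hf]
      exact AdjoinRoot.mk_self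
    rw [map_pow, AdjoinRoot.mk_X] at h0
    rw [eq_neg_iff_add_eq_zero]
    exact h0
  have hsum2 : IsSumSqN 2 (-1 : F) := by
    refine ⟨![AdjoinRoot.of f RatFunc.X, AdjoinRoot.root f], ?_⟩
    rw [Fin.sum_univ_two]
    simp only [Matrix.cons_val_zero, Matrix.cons_val_one, Matrix.head_cons]
    rw [hroot, ← map_pow]
    rw [show (-(AdjoinRoot.of f d) : F) = AdjoinRoot.of f (-d) from (map_neg _ _).symm]
    rw [← map_add, hd]
    rw [show (RatFunc.X ^ 2 + -(1 + RatFunc.X ^ 2) : L) = -1 by ring]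
    rw [map_neg, map_one]
  have hnsq : ∀ y : F, y ^ 2 ≠ -1 := adjoin_sq_ne_neg_one h2L hnegL hsqdL
  have hlevel : levelN F = 2 := levelN_eq_two hsum2 hnsq
  refine ⟨hlevel, ?_⟩
  have hchar : ringChar F ≠ 2 := by
    intro hch
    haveI : CharP F 2 := hch ▸ ringChar.charP F
    have h20 : (2 : F) = 0 := by
      have := CharP.cast_eq_zero F 2
      exact_mod_cast this
    apply h2L
    have : AdjoinRoot.of f (2 : L) = (2 : F) := map_ofNat _ 2
    exact (AdjoinRoot.of f).injective (by rw [this, h20, map_zero])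
  rw [pythNum', if_neg (by push_neg; exact ⟨⟨2, hsum2⟩, hchar⟩), hlevel]
  rfl
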